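/- arXiv:2207.10149 — 5 statements merged into one kernel-verified Lean document; each statement's English description precedes it below -/
import Mathlib

section
/- For every natural number R ≥ 0, the normalized upper incomplete gamma function evaluated at τ = R satisfies Q(R+1, R) = e^{-R} · Σ_{l=0}^{R} R^l / l! > 1/2. -/
open Real Set MeasureTheory Finset
open scoped ENNReal

-- core analytic inequality: e^y (2 - y) ≤ 2 + y for y ≥ 0
lemma pm_exp_mul_le (y : ℝ) (hy : 0 ≤ y) : Real.exp y * (2 - y) ≤ 2 + y := by
  have key : ∀ t : ℝ, Real.exp t * (1 - t) ≤ 1 := by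
    intro t
    have h1 : 1 - t ≤ Real.exp (-t) := by linarith [Real.add_one_le_exp (-t)]
    have := mul_le_mul_of_nonneg_left h1 (Real.exp_pos t).le
    rwa [← Real.exp_add, add_neg_cancel, Real.exp_zero] at this
  set g : ℝ → ℝ := fun y => 2 + y - Real.exp y * (2 - y) with hg
  have hder : ∀ x : ℝ, HasDerivAt g (1 - Real.exp x * (1 - x)) x := by
    intro x
    have h1 : HasDerivAt (fun y : ℝ => Real.exp y * (2 - y))
        (Real.exp x * (2 - x) + Real.exp x * (-1)) x :=
      by simpa using (Real.hasDerivAt_exp x).fun_mul ((hasDerivAt_const x (2:ℝ)).fun_sub (hasDerivAt_id x))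
    have h2 : HasDerivAt (fun y : ℝ => 2 + y) (1 : ℝ) x :=
      by simpa using (hasDerivAt_const x (2:ℝ)).fun_add (hasDerivAt_id x)
    have := h2.fun_sub h1
    refine this.congr_deriv ?_
    ring
  have hmono : Monotone g := by
    apply monotone_of_deriv_nonneg (fun x => (hder x).differentiableAt)
    intro x
    rw [(hder x).deriv]
    linarith [key x]
  have h0 : g 0 = 0 := by simp [hg]
  have := hmono hy
  rw [h0] at this
  simpa [hg] using this

-- pointwise comparison: f(a - x) ≤ f(a + x) for f t = t^n e^{-t}, a = n ≥ 1
lemma pm_pointwise (n : ℕ) (hn : 1 ≤ n) (x : ℝ) (hx0 : 0 ≤ x) (hxn : x ≤ n) :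
    ((n : ℝ) - x) ^ n * Real.exp (-((n : ℝ) - x)) ≤
      ((n : ℝ) + x) ^ n * Real.exp (-((n : ℝ) + x)) := by
  have hnpos : (0:ℝ) < n := by exact_mod_cast hn
  have hy : 0 ≤ 2 * x / n := by positivity
  have hcore := pm_exp_mul_le (2 * x / n) hy
  have h1 : Real.exp (2 * x / n) * ((n : ℝ) - x) ≤ (n : ℝ) + x := by
    have := mul_le_mul_of_nonneg_left hcore (by positivity : (0:ℝ) ≤ n / 2)
    have e1 : (n:ℝ) / 2 * (Real.exp (2*x/n) * (2 - 2*x/n)) = Real.exp (2*x/n) * ((n:ℝ) - x) := by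
      field_simp
    have e2 : (n:ℝ) / 2 * (2 + 2*x/n) = (n:ℝ) + x := by field_simp
    rw [e1, e2] at this
    exact this
  have hlhs0 : 0 ≤ Real.exp (2 * x / n) * ((n : ℝ) - x) := by
    have : (0:ℝ) ≤ (n:ℝ) - x := by linarith
    positivity
  have hpow := pow_le_pow_left₀ hlhs0 h1 n
  rw [mul_pow, ← Real.exp_nat_mul] at hpow
  have hexp : (n : ℝ) * (2 * x / n) = 2 * x := by field_simp
  rw [hexp] at hpow
  -- hpow : exp (2x) * (n - x)^n ≤ (n + x)^n
  have hmul := mul_le_mul_of_nonneg_right hpow (Real.exp_pos (-(n:ℝ) - x)).le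
  calc ((n : ℝ) - x) ^ n * Real.exp (-((n : ℝ) - x))
      = Real.exp (2*x) * ((n:ℝ) - x) ^ n * Real.exp (-(n:ℝ) - x) := by
        rw [mul_comm (Real.exp (2*x)) _, mul_assoc, ← Real.exp_add]; ring_nf
    _ ≤ ((n:ℝ) + x) ^ n * Real.exp (-(n:ℝ) - x) := hmul
    _ = ((n : ℝ) + x) ^ n * Real.exp (-((n : ℝ) + x)) := by ring_nf

-- derivative of the partial exponential sum
lemma pm_sum_hasDerivAt (n : ℕ) (τ : ℝ) :
    HasDerivAt (fun t : ℝ => ∑ l ∈ Finset.range (n+1), t ^ l / l.factorial)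
      (∑ l ∈ Finset.range n, τ ^ l / l.factorial) τ := by
  have h : HasDerivAt (fun t : ℝ => ∑ l ∈ Finset.range (n+1), t ^ l / l.factorial)
      (∑ l ∈ Finset.range (n+1), ((l : ℝ) * τ ^ (l-1)) / l.factorial) τ := by
    apply HasDerivAt.fun_sum
    intro l _
    exact (hasDerivAt_pow l τ).div_const _
  convert h using 1
  rw [Finset.sum_range_succ']
  simp only [Nat.cast_zero, Nat.factorial_zero, Nat.cast_one, zero_mul, zero_div, add_zero]
  apply Finset.sum_congr rfl
  intro i _
  simp only [Nat.add_sub_cancel]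
  have : ((i+1).factorial : ℝ) = (i+1) * i.factorial := by
    rw [Nat.factorial_succ]; push_cast; ring
  rw [this]
  have hi : ((i:ℝ)+1) ≠ 0 := by positivity
  field_simp
  push_cast
  ring

lemma pm_F_hasDerivAt (n : ℕ) (τ : ℝ) :
    HasDerivAt (fun t : ℝ => Real.exp (-t) * ∑ l ∈ Finset.range (n+1), t ^ l / l.factorial)
      (-(Real.exp (-τ) * (τ ^ n / n.factorial))) τ := by
  have he : HasDerivAt (fun t : ℝ => Real.exp (-t)) (Real.exp (-τ) * (-1)) τ :=
    (hasDerivAt_neg τ).exp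
  have h := he.fun_mul (pm_sum_hasDerivAt n τ)
  refine h.congr_deriv ?_
  rw [Finset.sum_range_succ]
  ring

lemma pm_integrable (n : ℕ) : IntegrableOn (fun t : ℝ => t ^ n * Real.exp (-t)) (Ioi 0) := by
  have h := Real.GammaIntegral_convergent (s := (n:ℝ)+1) (by positivity)
  apply h.congr_fun _ measurableSet_Ioi
  intro x hx
  simp only [add_sub_cancel_right, Real.rpow_natCast]
  ring

lemma pm_total (n : ℕ) :
    ∫ t in Ioi (0:ℝ), t ^ n * Real.exp (-t) = n.factorial := by
  have h := Real.Gamma_eq_integral (s := (n:ℝ)+1) (by positivity)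
  have h2 : Real.Gamma ((n:ℝ)+1) = n.factorial := by
    exact_mod_cast Real.Gamma_nat_eq_factorial n
  rw [h2] at h
  rw [h]
  apply setIntegral_congr_fun measurableSet_Ioi
  intro x hx
  simp only [add_sub_cancel_right, Real.rpow_natCast]
  ring

lemma pm_tendsto (n : ℕ) :
    Filter.Tendsto (fun t : ℝ => Real.exp (-t) * ∑ l ∈ Finset.range (n+1), t ^ l / l.factorial)
      Filter.atTop (nhds 0) := by
  have : ∀ t : ℝ, Real.exp (-t) * ∑ l ∈ Finset.range (n+1), t ^ l / l.factorial
      = ∑ l ∈ Finset.range (n+1), (t ^ l * Real.exp (-t)) / l.factorial := by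
    intro t
    rw [Finset.mul_sum]
    apply Finset.sum_congr rfl
    intro l _
    ring
  simp_rw [this]
  have h0 : (0:ℝ) = ∑ l ∈ Finset.range (n+1), (0:ℝ) / l.factorial := by simp
  rw [h0]
  apply tendsto_finset_sum
  intro l _
  have := (Real.tendsto_pow_mul_exp_neg_atTop_nhds_zero l).div_const (l.factorial : ℝ)
  simpa using this

lemma pm_tail (n : ℕ) (a : ℝ) (ha : 0 ≤ a) :
    ∫ t in Ioi a, t ^ n * Real.exp (-t)
      = n.factorial * (Real.exp (-a) * ∑ l ∈ Finset.range (n+1), a ^ l / l.factorial) := by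
  have hsub : Ioi a ⊆ Ioi (0:ℝ) ∨ a = 0 := by
    rcases eq_or_lt_of_le ha with h | h
    · exact Or.inr h.symm
    · exact Or.inl (Ioi_subset_Ioi h.le)
  have hint : IntegrableOn (fun t : ℝ => t ^ n * Real.exp (-t)) (Ioi a) := by
    rcases hsub with h | rfl
    · exact (pm_integrable n).mono_set h
    · exact pm_integrable n
  have hint' : IntegrableOn (fun t : ℝ => -(Real.exp (-t) * (t ^ n / n.factorial))) (Ioi a) := by
    have h0 : IntegrableOn (fun x : ℝ => -(x ^ n * Real.exp (-x) / n.factorial)) (Ioi a) :=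
      (hint.div_const _).neg
    apply h0.congr_fun _ measurableSet_Ioi
    intro x _
    ring
  have hftc := integral_Ioi_of_hasDerivAt_of_tendsto'
      (f := fun t : ℝ => Real.exp (-t) * ∑ l ∈ Finset.range (n+1), t ^ l / l.factorial)
      (f' := fun t : ℝ => -(Real.exp (-t) * (t ^ n / n.factorial)))
      (a := a) (m := 0)
      (fun x _ => pm_F_hasDerivAt n x) hint' (pm_tendsto n)
  rw [integral_neg] at hftc
  have h2 : ∫ t in Ioi a, Real.exp (-t) * (t ^ n / n.factorial)
      = Real.exp (-a) * ∑ l ∈ Finset.range (n+1), a ^ l / l.factorial := by linarith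
  have h3 : ∫ t in Ioi a, t ^ n * Real.exp (-t)
      = ∫ t in Ioi a, (n.factorial : ℝ) * (Real.exp (-t) * (t ^ n / n.factorial)) := by
    apply setIntegral_congr_fun measurableSet_Ioi
    intro x _
    have : (n.factorial : ℝ) ≠ 0 := by positivity
    field_simp
  rw [h3, integral_const_mul, h2]

/-- `Q(R+1, R) = e^{-R} Σ_{l=0}^{R} R^l / l! > 1/2`: a Poisson random variable with mean `R`
assigns mass more than one half to `{0, …, R}`. -/
theorem poisson_median_bound (R : ℕ) :
    1 / 2 < Real.exp (-(R : ℝ)) * ∑ l ∈ Finset.range (R + 1), (R : ℝ) ^ l / l.factorial := by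
  rcases Nat.eq_zero_or_pos R with rfl | hR
  · norm_num
  set n := R
  have hn : 1 ≤ n := hR
  set a : ℝ := (n : ℝ) with ha
  have hapos : (0:ℝ) < a := by rw [ha]; exact_mod_cast hR
  set f : ℝ → ℝ := fun t => t ^ n * Real.exp (-t) with hf
  have hfc : Continuous f := (continuous_pow n).mul (Real.continuous_exp.comp continuous_neg)
  -- split the total integral
  have hsplit : ∫ t in Ioi (0:ℝ), f t = (∫ t in Ioc (0:ℝ) a, f t) + ∫ t in Ioi a, f t := by
    rw [← Ioc_union_Ioi_eq_Ioi hapos.le]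
    apply setIntegral_union (Ioc_disjoint_Ioi le_rfl) measurableSet_Ioi
    · exact (pm_integrable n).mono_set Set.Ioc_subset_Ioi_self
    · exact (pm_integrable n).mono_set (Ioi_subset_Ioi hapos.le)
  have hsplit2 : ∫ t in Ioi a, f t = (∫ t in Ioc a (2*a), f t) + ∫ t in Ioi (2*a), f t := by
    rw [← Ioc_union_Ioi_eq_Ioi (by linarith : a ≤ 2*a)]
    apply setIntegral_union (Ioc_disjoint_Ioi le_rfl) measurableSet_Ioi
    · exact (pm_integrable n).mono_set ((Set.Ioc_subset_Ioi_self).trans (Ioi_subset_Ioi hapos.le))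
    · exact (pm_integrable n).mono_set (Ioi_subset_Ioi (by linarith))
  -- positivity of the far tail
  have hpos : 0 < ∫ t in Ioi (2*a), f t := by
    rw [setIntegral_pos_iff_support_of_nonneg_ae]
    · have hsub : Ioi (2*a) ⊆ Function.support f := by
        intro x hx
        have hx0 : 0 < x := by simp only [Set.mem_Ioi] at hx; linarith
        have : 0 < f x := by positivity
        exact fun h => this.ne' h
      calc (0:ℝ≥0∞) < volume (Ioi (2*a)) := by rw [Real.volume_Ioi]; exact ENNReal.zero_lt_top
        _ ≤ volume (Function.support f ∩ Ioi (2*a)) := by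
            apply measure_mono
            intro x hx
            exact ⟨hsub hx, hx⟩
    · filter_upwards [ae_restrict_mem measurableSet_Ioi] with x hx
      have hx0 : 0 < x := by simp only [Set.mem_Ioi] at hx; linarith
      positivity
    · exact (pm_integrable n).mono_set (Ioi_subset_Ioi (by linarith))
  -- reflection comparison
  have hI1 : ∫ t in Ioc (0:ℝ) a, f t = ∫ x in (0:ℝ)..a, f (a - x) := by
    rw [intervalIntegral.integral_comp_sub_left f a]
    simp only [sub_self, sub_zero]
    rw [intervalIntegral.integral_of_le hapos.le]
  have hI2 : ∫ t in Ioc a (2*a), f t = ∫ x in (0:ℝ)..a, f (a + x) := by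
    rw [intervalIntegral.integral_comp_add_left f a]
    rw [add_zero, intervalIntegral.integral_of_le (by linarith)]
    norm_num [two_mul]
  have hcomp : ∫ x in (0:ℝ)..a, f (a - x) ≤ ∫ x in (0:ℝ)..a, f (a + x) := by
    apply intervalIntegral.integral_mono_on hapos.le
    · exact (hfc.comp (continuous_const.sub continuous_id)).intervalIntegrable 0 a
    · exact (hfc.comp (continuous_const.add continuous_id)).intervalIntegrable 0 a
    · intro x hx
      exact pm_pointwise n hn x hx.1 hx.2
  -- assemble
  have htail := pm_tail n a hapos.le
  have htot := pm_total n
  set T : ℝ := ∫ t in Ioi a, f t with hT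
  set P : ℝ := Real.exp (-a) * ∑ l ∈ Finset.range (n+1), a ^ l / l.factorial with hP
  have hTP : T = n.factorial * P := htail
  have hfac : (0:ℝ) < n.factorial := by positivity
  have hineq : (n.factorial : ℝ) < 2 * T := by
    have e1 : (n.factorial : ℝ) = (∫ t in Ioc (0:ℝ) a, f t) + T := by rw [← htot, hsplit]
    have e2 : ∫ t in Ioc (0:ℝ) a, f t ≤ ∫ t in Ioc a (2*a), f t := by
      rw [hI1, hI2]; exact hcomp
    have e3 : ∫ t in Ioc a (2*a), f t < T := by
      rw [hsplit2]; linarith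
    linarith
  have : 1/2 < P := by
    rw [hTP] at hineq
    nlinarith
  exact this
end

section
/- Consider the source-star graph G_ss(d, β, ℓ) with d ≥ 1, β ≥ 1, depth ℓ ≥ 1, and its out-degree normalized Laplacian ℒ. Let u(τ) = exp(-τℒ)·e_0 where e_0 is the indicator of the center node. Then u_0(τ) = e^{-τ}; for any non-leaf node i at distance l with 1 ≤ l ≤ ℓ-1, u_i(τ) = (1/(d·β^{l-1}))·(τ^l/l!)·e^{-τ}; and for any leaf node i at distance ℓ, u_i(τ) = (1/(d·β^{ℓ-1}))·P(ℓ, τ), where P(ℓ,τ) = γ(ℓ,τ)/(ℓ-1)! is the normalized lower incomplete gamma function. -/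
open scoped Classical

/-- Vertices of the source-star graph `G_ss(d, β, ℓ)`: `none` is the center; `some ⟨l, ν⟩` is the
`ν`-th node at directed distance `l + 1` from the center (there are `d·β^l` such nodes). -/
abbrev SSV (d β ℓ : ℕ) := Option ((l : Fin ℓ) × Fin (d * β ^ (l : ℕ)))

/-- Directed distance from the center. -/
def ssDepth {d β ℓ : ℕ} : SSV d β ℓ → ℕ
  | none => 0
  | some x => (x.1 : ℕ) + 1

/-- `ssChild β i j` : `i` is an out-neighbour (child) of `j` in the source-star graph; the parent
of the node indexed `ν` at depth `l + 1` is the node indexed `ν / β` at depth `l`. -/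
def ssChild {d ℓ : ℕ} (β : ℕ) : SSV d β ℓ → SSV d β ℓ → Prop
  | some x, none => (x.1 : ℕ) = 0
  | some x, some y => (x.1 : ℕ) = (y.1 : ℕ) + 1 ∧ (x.2 : ℕ) / β = (y.2 : ℕ)
  | none, _ => False

/-- The out-degree normalized Laplacian of the source-star graph: diagonal entry `1` for non-leaf
nodes and `0` for leaves; entry `-1/d` for children of the center and `-1/β` for other children. -/
noncomputable def ssLap (d β ℓ : ℕ) : Matrix (SSV d β ℓ) (SSV d β ℓ) ℝ := fun i j =>
  (if i = j ∧ ssDepth j < ℓ then (1 : ℝ) else 0) -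
    (if ssChild β i j then (if j = none then (d : ℝ)⁻¹ else (β : ℝ)⁻¹) else 0)

/-! ### Auxiliary material -/

/-- The candidate solution of the heat equation. -/
noncomputable def ssW (d β ℓ : ℕ) (τ : ℝ) : SSV d β ℓ → ℝ := fun v =>
  match v with
  | none => Real.exp (-τ)
  | some x =>
    if (x.1 : ℕ) + 1 < ℓ then
      1 / ((d : ℝ) * (β : ℝ) ^ (x.1 : ℕ)) *
        (τ ^ ((x.1 : ℕ) + 1) / ((x.1 : ℕ) + 1).factorial) * Real.exp (-τ)
    else
      1 / ((d : ℝ) * (β : ℝ) ^ (x.1 : ℕ)) *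
        ((∫ t in (0:ℝ)..τ, t ^ (x.1 : ℕ) * Real.exp (-t)) / ((x.1 : ℕ)).factorial)

/-- The parent of a non-center node. -/
def ssParent {d β ℓ : ℕ} (hβ : 1 ≤ β) (x : (l : Fin ℓ) × Fin (d * β ^ (l : ℕ))) : SSV d β ℓ :=
  if h : (x.1 : ℕ) = 0 then none
  else
    some ⟨⟨(x.1 : ℕ) - 1, lt_of_le_of_lt (Nat.pred_le _) x.1.2⟩,
      ⟨(x.2 : ℕ) / β, by
        have hb : 0 < β := hβ
        rw [Nat.div_lt_iff_lt_mul hb]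
        have : (x.2 : ℕ) < d * β ^ (x.1 : ℕ) := x.2.2
        calc (x.2 : ℕ) < d * β ^ (x.1 : ℕ) := this
          _ = d * β ^ ((x.1 : ℕ) - 1 + 1) := by
              rw [Nat.sub_add_cancel (Nat.one_le_iff_ne_zero.mpr h)]
          _ = d * β ^ ((x.1 : ℕ) - 1) * β := by rw [pow_succ, mul_assoc]⟩⟩

lemma ssv_ext {d β ℓ : ℕ} {a b : (l : Fin ℓ) × Fin (d * β ^ (l : ℕ))}
    (h1 : (a.1 : ℕ) = (b.1 : ℕ)) (h2 : (a.2 : ℕ) = (b.2 : ℕ)) : a = b := by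
  obtain ⟨a1, a2⟩ := a
  obtain ⟨b1, b2⟩ := b
  dsimp at h1 h2
  have : a1 = b1 := Fin.ext h1
  subst this
  congr 1
  exact Fin.ext h2

lemma ssChild_iff {d β ℓ : ℕ} (hβ : 1 ≤ β) (x : (l : Fin ℓ) × Fin (d * β ^ (l : ℕ)))
    (j : SSV d β ℓ) : ssChild β (some x) j ↔ j = ssParent hβ x := by
  by_cases h : (x.1 : ℕ) = 0
  · cases j with
    | none => simp [ssChild, ssParent, h]
    | some y =>
      simp only [ssChild, ssParent, dif_pos h]
      constructor
      · rintro ⟨h1, -⟩; omega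
      · intro hc; exact absurd hc (by simp)
  · cases j with
    | none =>
      simp only [ssChild, ssParent, dif_neg h]
      constructor
      · intro hc; exact absurd hc h
      · intro hc; exact absurd hc (by simp)
    | some y =>
      simp only [ssChild, ssParent, dif_neg h, Option.some.injEq]
      constructor
      · rintro ⟨h1, h2⟩
        exact (ssv_ext (by dsimp; omega) (by dsimp; omega)).symm
      · intro hy
        subst hy
        refine ⟨by dsimp; omega, by dsimp⟩

lemma ssParent_eq_none_iff {d β ℓ : ℕ} (hβ : 1 ≤ β) (x : (l : Fin ℓ) × Fin (d * β ^ (l : ℕ))) :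
    ssParent hβ x = none ↔ (x.1 : ℕ) = 0 := by
  unfold ssParent
  split
  · simpa
  · simp_all

lemma ssLap_mulVec_none {d β ℓ : ℕ} (hℓ : 1 ≤ ℓ) (w : SSV d β ℓ → ℝ) :
    (ssLap d β ℓ).mulVec w none = w none := by
  unfold Matrix.mulVec dotProduct ssLap
  have : ∀ j : SSV d β ℓ,
      ((if none = j ∧ ssDepth j < ℓ then (1:ℝ) else 0) -
        (if ssChild β none j then (if j = none then (d : ℝ)⁻¹ else (β : ℝ)⁻¹) else 0)) * w j =
      (if j = none then w j else 0) := by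
    intro j
    have : ¬ ssChild β none j := by cases j <;> simp [ssChild]
    rw [if_neg this]
    by_cases hj : j = none
    · subst hj
      have hpos : ssDepth (none : SSV d β ℓ) < ℓ := hℓ
      simp [hpos]
    · simp [hj, Ne.symm hj]
  rw [Finset.sum_congr rfl fun j _ => this j, Finset.sum_ite_eq' Finset.univ none w]
  simp

lemma ssLap_mulVec_some {d β ℓ : ℕ} (hβ : 1 ≤ β) (w : SSV d β ℓ → ℝ)
    (x : (l : Fin ℓ) × Fin (d * β ^ (l : ℕ))) :
    (ssLap d β ℓ).mulVec w (some x) =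
      (if (x.1 : ℕ) + 1 < ℓ then w (some x) else 0) -
        (if (x.1 : ℕ) = 0 then (d : ℝ)⁻¹ else (β : ℝ)⁻¹) * w (ssParent hβ x) := by
  unfold Matrix.mulVec dotProduct ssLap
  simp only [sub_mul]
  rw [Finset.sum_sub_distrib]
  congr 1
  · have : ∀ j : SSV d β ℓ,
        (if some x = j ∧ ssDepth j < ℓ then (1:ℝ) else 0) * w j =
        (if j = some x then (if (x.1 : ℕ) + 1 < ℓ then w j else 0) else 0) := by
      intro j
      by_cases hj : j = some x
      · subst hj
        by_cases hlt : (x.1 : ℕ) + 1 < ℓ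
        · simp [ssDepth, hlt]
        · simp [ssDepth, hlt]
      · rw [if_neg (by rintro ⟨h1, -⟩; exact hj h1.symm), if_neg hj, zero_mul]
    rw [Finset.sum_congr rfl fun j _ => this j, Finset.sum_ite_eq' Finset.univ (some x)]
    simp
  · have : ∀ j : SSV d β ℓ,
        (if ssChild β (some x) j then (if j = none then (d : ℝ)⁻¹ else (β : ℝ)⁻¹) else 0) * w j =
        (if j = ssParent hβ x then
          (if j = none then (d : ℝ)⁻¹ else (β : ℝ)⁻¹) * w j else 0) := by
      intro j
      by_cases hc : ssChild β (some x) j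
      · rw [if_pos hc, if_pos ((ssChild_iff hβ x j).mp hc)]
      · rw [if_neg hc, if_neg (fun h => hc ((ssChild_iff hβ x j).mpr h)), zero_mul]
    rw [Finset.sum_congr rfl fun j _ => this j,
      Finset.sum_ite_eq' Finset.univ (ssParent hβ x)]
    simp only [Finset.mem_univ, if_true]
    congr 1
    by_cases h0 : (x.1 : ℕ) = 0
    · rw [if_pos h0, if_pos ((ssParent_eq_none_iff hβ x).mpr h0)]
    · rw [if_neg h0, if_neg (fun h => h0 ((ssParent_eq_none_iff hβ x).mp h))]

lemma hasDerivAt_exp_neg (τ : ℝ) : HasDerivAt (fun s : ℝ => Real.exp (-s)) (-Real.exp (-τ)) τ := by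
  simpa [Function.comp_def] using ((Real.hasDerivAt_exp (-τ)).comp τ (hasDerivAt_neg τ))

lemma ssW_ssParent {d β ℓ : ℕ} (hβ : 1 ≤ β) (x : (l : Fin ℓ) × Fin (d * β ^ (l : ℕ)))
    (τ : ℝ) :
    ssW d β ℓ τ (ssParent hβ x) =
      if (x.1 : ℕ) = 0 then Real.exp (-τ)
      else 1 / ((d : ℝ) * (β : ℝ) ^ ((x.1 : ℕ) - 1)) *
        (τ ^ (x.1 : ℕ) / ((x.1 : ℕ)).factorial) * Real.exp (-τ) := by
  unfold ssParent
  by_cases h : (x.1 : ℕ) = 0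
  · rw [dif_pos h, if_pos h]; rfl
  · rw [dif_neg h, if_neg h]
    have hlt : (x.1 : ℕ) - 1 + 1 < ℓ := by
      have := x.1.2; omega
    have hs : (x.1 : ℕ) - 1 + 1 = (x.1 : ℕ) := by omega
    simp only [ssW, hlt, if_pos, hs]
    rw [if_pos x.1.2]

lemma coef_parent {d β ℓ : ℕ} (hd : 1 ≤ d) (hβ : 1 ≤ β)
    (x : (l : Fin ℓ) × Fin (d * β ^ (l : ℕ))) (τ : ℝ) :
    (if (x.1 : ℕ) = 0 then (d : ℝ)⁻¹ else (β : ℝ)⁻¹) * ssW d β ℓ τ (ssParent hβ x) =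
      1 / ((d : ℝ) * (β : ℝ) ^ (x.1 : ℕ)) *
        (τ ^ (x.1 : ℕ) / ((x.1 : ℕ)).factorial) * Real.exp (-τ) := by
  have hd0 : (d : ℝ) ≠ 0 := by positivity
  have hβ0 : (β : ℝ) ≠ 0 := by
    have : 0 < β := hβ
    positivity
  rw [ssW_ssParent hβ x τ]
  by_cases h : (x.1 : ℕ) = 0
  · rw [if_pos h, if_pos h, h]
    norm_num [Nat.factorial]
  · rw [if_neg h, if_neg h]
    have hpow : ((β : ℝ) ^ ((x.1 : ℕ) - 1)) * β = (β : ℝ) ^ (x.1 : ℕ) := by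
      rw [← pow_succ, Nat.sub_add_cancel (by omega)]
    rw [← hpow]
    have hp0 : ((β : ℝ) ^ ((x.1 : ℕ) - 1)) ≠ 0 := pow_ne_zero _ hβ0
    field_simp

lemma hasDerivAt_poly_exp (c : ℝ) (n : ℕ) (τ : ℝ) :
    HasDerivAt (fun s : ℝ => c * (s ^ (n + 1) / (n + 1).factorial) * Real.exp (-s))
      (c * (τ ^ n / n.factorial) * Real.exp (-τ) -
        c * (τ ^ (n + 1) / (n + 1).factorial) * Real.exp (-τ)) τ := by
  have h1 : HasDerivAt (fun s : ℝ => s ^ (n + 1)) (((n:ℝ) + 1) * τ ^ n) τ := by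
    simpa using hasDerivAt_pow (n + 1) τ
  have h2 := hasDerivAt_exp_neg τ
  have h3 := (h1.mul h2).const_mul (c / (n + 1).factorial)
  have hfact : ((n + 1).factorial : ℝ) = ((n : ℝ) + 1) * n.factorial := by
    rw [Nat.factorial_succ]; push_cast; ring
  have hne : ((n : ℝ) + 1) ≠ 0 := by positivity
  have hne2 : (n.factorial : ℝ) ≠ 0 := by
    exact_mod_cast Nat.factorial_ne_zero n
  have e : (fun s : ℝ => c * (s ^ (n + 1) / (n + 1).factorial) * Real.exp (-s)) =
      fun y => c / ↑(n + 1).factorial * ((fun s : ℝ => s ^ (n + 1)) * fun s => Real.exp (-s)) y := by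
    funext s; simp only [Pi.mul_apply]; ring
  rw [e]
  refine h3.congr_deriv ?_
  rw [hfact]; field_simp; ring

lemma hasDerivAt_intgamma (c : ℝ) (n : ℕ) (τ : ℝ) :
    HasDerivAt (fun s : ℝ => c * ((∫ t in (0:ℝ)..s, t ^ n * Real.exp (-t)) / (n.factorial : ℝ)))
      (c * (τ ^ n / (n.factorial : ℝ)) * Real.exp (-τ)) τ := by
  have hc : Continuous fun t : ℝ => t ^ n * Real.exp (-t) :=
    (continuous_pow n).mul (Real.continuous_exp.comp continuous_neg)
  have h := ((hc.integral_hasStrictDerivAt 0 τ).hasDerivAt.div_const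
    ((n.factorial : ℝ))).const_mul c
  exact h.congr_deriv (by ring)

lemma ssW_hasDerivAt (d β ℓ : ℕ) (hd : 1 ≤ d) (hβ : 1 ≤ β) (hℓ : 1 ≤ ℓ) (τ : ℝ)
    (v : SSV d β ℓ) :
    HasDerivAt (fun s => ssW d β ℓ s v) (-((ssLap d β ℓ).mulVec (ssW d β ℓ τ) v)) τ := by
  cases v with
  | none =>
    rw [ssLap_mulVec_none hℓ]
    exact hasDerivAt_exp_neg τ
  | some x =>
    rw [ssLap_mulVec_some hβ (ssW d β ℓ τ) x]
    by_cases hlt : (x.1 : ℕ) + 1 < ℓ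
    · rw [if_pos hlt]
      have hfun : (fun s => ssW d β ℓ s (some x)) = fun s =>
          1 / ((d : ℝ) * (β : ℝ) ^ (x.1 : ℕ)) *
            (s ^ ((x.1 : ℕ) + 1) / ((x.1 : ℕ) + 1).factorial) * Real.exp (-s) := by
        funext s; simp only [ssW, if_pos hlt]
      rw [hfun,
        show ssW d β ℓ τ (some x) = 1 / ((d : ℝ) * (β : ℝ) ^ (x.1 : ℕ)) *
          (τ ^ ((x.1 : ℕ) + 1) / ((x.1 : ℕ) + 1).factorial) * Real.exp (-τ) from by
            simp only [ssW, if_pos hlt],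
        coef_parent hd hβ x τ, neg_sub]
      exact hasDerivAt_poly_exp _ _ τ
    · rw [if_neg hlt, zero_sub, neg_neg, coef_parent hd hβ x τ]
      have hfun : (fun s => ssW d β ℓ s (some x)) = fun s =>
          1 / ((d : ℝ) * (β : ℝ) ^ (x.1 : ℕ)) *
            ((∫ t in (0:ℝ)..s, t ^ (x.1 : ℕ) * Real.exp (-t)) /
              (((x.1 : ℕ)).factorial : ℝ)) := by
        funext s; simp only [ssW, if_neg hlt]
      rw [hfun]
      exact hasDerivAt_intgamma _ _ τ

lemma ssW_zero (d β ℓ : ℕ) (v : SSV d β ℓ) :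
    ssW d β ℓ 0 v = (if v = none then (1:ℝ) else 0) := by
  cases v with
  | none => simp [ssW]
  | some x =>
    simp only [ssW, reduceCtorEq, if_false]
    split
    · simp [zero_pow (Nat.succ_ne_zero _)]
    · simp

lemma ssHeat_eq_ssW (d β ℓ : ℕ) (hd : 1 ≤ d) (hβ : 1 ≤ β) (hℓ : 1 ≤ ℓ) (τ : ℝ) :
    (NormedSpace.exp (-τ • ssLap d β ℓ)).mulVec
      (fun v => if v = none then (1 : ℝ) else 0) = ssW d β ℓ τ := by
  letI : SeminormedRing (Matrix (SSV d β ℓ) (SSV d β ℓ) ℝ) := Matrix.linftyOpSemiNormedRing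
  letI : NormedRing (Matrix (SSV d β ℓ) (SSV d β ℓ) ℝ) := Matrix.linftyOpNormedRing
  letI : NormedAlgebra ℝ (Matrix (SSV d β ℓ) (SSV d β ℓ) ℝ) := Matrix.linftyOpNormedAlgebra
  set L := ssLap d β ℓ with hL
  -- each coordinate of `s ↦ exp(sL) ⬝ w(s)` has zero derivative
  have hg : ∀ (v : SSV d β ℓ) (s : ℝ),
      HasDerivAt (fun u => (NormedSpace.exp (u • L)).mulVec (ssW d β ℓ u) v) 0 s := by
    intro v s
    have hE : HasDerivAt (fun u : ℝ => NormedSpace.exp (u • L))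
        (NormedSpace.exp (s • L) * L) s := hasDerivAt_exp_smul_const L s
    have hEntry : ∀ j : SSV d β ℓ,
        HasDerivAt (fun u : ℝ => (NormedSpace.exp (u • L)) v j)
          ((NormedSpace.exp (s • L) * L) v j) s := by
      intro j
      have φh := (LinearMap.toContinuousLinearMap
        (Matrix.entryLinearMap ℝ ℝ v j :
          Matrix (SSV d β ℓ) (SSV d β ℓ) ℝ →ₗ[ℝ] ℝ)).hasFDerivAt.comp_hasDerivAt s hE
      exact φh
    have hterm : ∀ j : SSV d β ℓ,
        HasDerivAt (fun u : ℝ => (NormedSpace.exp (u • L)) v j * ssW d β ℓ u j)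
          ((NormedSpace.exp (s • L) * L) v j * ssW d β ℓ s j +
            (NormedSpace.exp (s • L)) v j * -((L.mulVec (ssW d β ℓ s)) j)) s := by
      intro j
      exact (hEntry j).mul (ssW_hasDerivAt d β ℓ hd hβ hℓ s j)
    have hsum := HasDerivAt.sum (fun j _ => hterm j)
      (u := Finset.univ (α := SSV d β ℓ))
    have hfun : (fun u : ℝ => ∑ j : SSV d β ℓ,
        (NormedSpace.exp (u • L)) v j * ssW d β ℓ u j) =
        fun u => (NormedSpace.exp (u • L)).mulVec (ssW d β ℓ u) v := rfl
    rw [Finset.sum_fn, hfun] at hsum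
    have hzero : ∑ j : SSV d β ℓ,
        ((NormedSpace.exp (s • L) * L) v j * ssW d β ℓ s j +
          (NormedSpace.exp (s • L)) v j * -((L.mulVec (ssW d β ℓ s)) j)) = 0 := by
      rw [Finset.sum_add_distrib]
      have h1 : ∑ j : SSV d β ℓ, (NormedSpace.exp (s • L) * L) v j * ssW d β ℓ s j
          = ((NormedSpace.exp (s • L) * L).mulVec (ssW d β ℓ s)) v := rfl
      have h2 : ∑ j : SSV d β ℓ,
          (NormedSpace.exp (s • L)) v j * -((L.mulVec (ssW d β ℓ s)) j)
          = -(((NormedSpace.exp (s • L)).mulVec (L.mulVec (ssW d β ℓ s))) v) := by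
        simp only [mul_neg]
        rw [Finset.sum_neg_distrib]
        rfl
      rw [h1, h2, ← Matrix.mulVec_mulVec]
      ring
    rw [hzero] at hsum
    exact hsum
  -- hence it is constant
  have hconst : ∀ (v : SSV d β ℓ) (t : ℝ),
      (NormedSpace.exp (t • L)).mulVec (ssW d β ℓ t) v
        = (if v = none then (1 : ℝ) else 0) := by
    intro v t
    have := is_const_of_deriv_eq_zero (f := fun u =>
        (NormedSpace.exp (u • L)).mulVec (ssW d β ℓ u) v)
      (fun s => (hg v s).differentiableAt) (fun s => (hg v s).deriv) t 0
    rw [this, zero_smul, NormedSpace.exp_zero, Matrix.one_mulVec]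
    exact ssW_zero d β ℓ v
  have hτg : (NormedSpace.exp (τ • L)).mulVec (ssW d β ℓ τ)
      = (fun v => if v = none then (1 : ℝ) else 0) := funext fun v => hconst v τ
  rw [← hτg, Matrix.mulVec_mulVec]
  have hcomm : Commute (-τ • L) (τ • L) :=
    ((Commute.refl L).smul_right τ).smul_left (-τ)
  rw [← Matrix.exp_add_of_commute _ _ hcomm]
  have : (-τ • L) + (τ • L) = 0 := by
    rw [← add_smul]; simp
  rw [this, NormedSpace.exp_zero, Matrix.one_mulVec]

/-- Analytical expression for the heat coefficients on the source-star graph, with heat initialized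
at the center: `u₀(τ) = e^{-τ}`; for a non-leaf node at distance `l+1`,
`u(τ) = (1/(d β^l)) (τ^{l+1}/(l+1)!) e^{-τ}`; for a leaf node (distance `ℓ`),
`u(τ) = (1/(d β^{ℓ-1})) γ(ℓ, τ)/(ℓ-1)!`. -/
theorem sourceStar_heat_coefficients (d β ℓ : ℕ) (hd : 1 ≤ d) (hβ : 1 ≤ β) (hℓ : 1 ≤ ℓ)
    (τ : ℝ) (hτ : 0 ≤ τ) :
    ((NormedSpace.exp (-τ • ssLap d β ℓ)).mulVec
        (fun v => if v = none then (1 : ℝ) else 0)) none = Real.exp (-τ) ∧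
    (∀ x : (l : Fin ℓ) × Fin (d * β ^ (l : ℕ)), (x.1 : ℕ) + 1 < ℓ →
      ((NormedSpace.exp (-τ • ssLap d β ℓ)).mulVec
          (fun v => if v = none then (1 : ℝ) else 0)) (some x) =
        1 / ((d : ℝ) * (β : ℝ) ^ (x.1 : ℕ)) *
          (τ ^ ((x.1 : ℕ) + 1) / ((x.1 : ℕ) + 1).factorial) * Real.exp (-τ)) ∧
    (∀ x : (l : Fin ℓ) × Fin (d * β ^ (l : ℕ)), (x.1 : ℕ) + 1 = ℓ →
      ((NormedSpace.exp (-τ • ssLap d β ℓ)).mulVec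
          (fun v => if v = none then (1 : ℝ) else 0)) (some x) =
        1 / ((d : ℝ) * (β : ℝ) ^ (ℓ - 1)) *
          ((∫ t in (0:ℝ)..τ, t ^ (ℓ - 1) * Real.exp (-t)) / (ℓ - 1).factorial)) := by
  rw [ssHeat_eq_ssW d β ℓ hd hβ hℓ τ]
  refine ⟨rfl, fun x hx => ?_, fun x hx => ?_⟩
  · simp [ssW, hx]
  · have h1 : ℓ - 1 = (x.1 : ℕ) := by omega
    simp [ssW, hx, h1, lt_irrefl]
end

section
/- In the source-star graph G_ss(d, β, ℓ), with heat initialized at the center node and u(τ) = exp(-τℒ)e_0, for any radius R < ℓ the total heat within distance R of the center equals exactly Γ(R+1, τ)/Γ(R+1): Σ_{i : dist(0,i) ≤ R} u_i(τ) = e^{-τ} Σ_{l=0}^{R} τ^l/l!. -/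
open scoped Classical

section Aux
variable {d β ℓ : ℕ}

lemma ssChild_depth {v w : SSV d β ℓ} (h : ssChild β v w) : ssDepth v = ssDepth w + 1 := by
  cases v with
  | none => exact absurd h (by simp [ssChild])
  | some x =>
    cases w with
    | none => simp [ssChild] at h; simp [ssDepth, h]
    | some y => simp [ssChild] at h; simp [ssDepth, h.1]

lemma divCount (hβ : 1 ≤ β) (N c : ℕ) (hc : (c + 1) * β ≤ N) :
    ((Finset.range N).filter (fun j => j / β = c)).card = β := by
  have h : (Finset.range N).filter (fun j => j / β = c) = Finset.Ico (c * β) (c * β + β) := by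
    ext j
    simp only [Finset.mem_filter, Finset.mem_range, Finset.mem_Ico]
    constructor
    · rintro ⟨hj, rfl⟩
      refine ⟨Nat.div_mul_le_self j β, ?_⟩
      have h2 := Nat.div_add_mod j β
      have h3 := Nat.mod_lt j (by omega : 0 < β)
      have h4 : j / β * β = β * (j / β) := Nat.mul_comm _ _
      omega
    · rintro ⟨h1, h2⟩
      constructor
      · calc j < c * β + β := h2
          _ = (c+1) * β := by ring
          _ ≤ N := hc
      · have := (Nat.le_div_iff_mul_le hβ).mpr h1
        have := (Nat.div_lt_iff_lt_mul hβ).mpr (by linarith [h2] : j < (c+1) * β)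
        omega
  rw [h, Nat.card_Ico]; omega
end Aux
section Aux2
variable {d β ℓ : ℕ}

lemma childCount (hd : 1 ≤ d) (hβ : 1 ≤ β) (w : SSV d β ℓ) (hw : ssDepth w < ℓ) :
    ∑ v : SSV d β ℓ,
      (if ssChild β v w then (if w = none then (d : ℝ)⁻¹ else (β : ℝ)⁻¹) else 0) = 1 := by
  rw [Fintype.sum_option]
  have h0 : (if ssChild β (none : SSV d β ℓ) w then (if w = none then (d : ℝ)⁻¹ else (β : ℝ)⁻¹) else 0) = 0 := by
    simp [ssChild]
  rw [h0, zero_add, ← Finset.univ_sigma_univ, Finset.sum_sigma]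
  cases w with
  | none =>
    have hℓ : 0 < ℓ := hw
    have key : ∀ i : Fin ℓ, (∑ j : Fin (d * β ^ (i:ℕ)),
        if ssChild β (some ⟨i, j⟩) none then (if (none : SSV d β ℓ) = none then (d : ℝ)⁻¹ else (β : ℝ)⁻¹) else 0)
        = if i = (⟨0, hℓ⟩ : Fin ℓ) then (1:ℝ) else 0 := by
      intro i
      by_cases hi : i = (⟨0, hℓ⟩ : Fin ℓ)
      · subst hi
        simp only [ssChild, if_pos rfl]
        rw [Finset.sum_const, Finset.card_univ, Fintype.card_fin]
        simp [Finset.sum_const, Finset.card_univ, mul_inv_cancel₀ (by positivity : (d:ℝ) ≠ 0)]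
      · have : (i : ℕ) ≠ 0 := fun h => hi (Fin.ext h)
        simp [ssChild, this, hi]
    rw [Finset.sum_congr rfl (fun i _ => key i)]
    simp
  | some y =>
    have hy : (y.1 : ℕ) + 1 < ℓ := hw
    set iy : Fin ℓ := ⟨(y.1 : ℕ) + 1, hy⟩ with hiy
    have key : ∀ i : Fin ℓ, (∑ j : Fin (d * β ^ (i:ℕ)),
        if ssChild β (some ⟨i, j⟩) (some y) then (if (some y : SSV d β ℓ) = none then (d : ℝ)⁻¹ else (β : ℝ)⁻¹) else 0)
        = if i = iy then (1:ℝ) else 0 := by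
      intro i
      by_cases hi : i = iy
      · subst hi
        have key2 : ∀ j : Fin (d * β ^ ((y.1:ℕ)+1)),
            (if ssChild β (some ⟨iy, j⟩) (some y) then (if (some y : SSV d β ℓ) = none then (d:ℝ)⁻¹ else (β:ℝ)⁻¹) else 0)
            = if (j:ℕ) / β = (y.2:ℕ) then (β:ℝ)⁻¹ else 0 := by
          intro j; simp [ssChild, hiy]
        rw [Finset.sum_congr rfl (fun j _ => key2 j), if_pos rfl]
        rw [Fin.sum_univ_eq_sum_range (fun j => if j / β = (y.2:ℕ) then (β:ℝ)⁻¹ else 0)]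
        rw [← Finset.sum_filter]
        rw [Finset.sum_const, divCount hβ _ _ ?_, nsmul_eq_mul,
          mul_inv_cancel₀ (by positivity : (β:ℝ) ≠ 0)]
        have h2 : (y.2 : ℕ) < d * β ^ (y.1 : ℕ) := y.2.2
        calc ((y.2:ℕ) + 1) * β ≤ (d * β ^ (y.1:ℕ)) * β := by nlinarith
          _ = d * β ^ ((y.1:ℕ)+1) := by ring
      · have : (i : ℕ) ≠ (y.1 : ℕ) + 1 := fun h => hi (Fin.ext h)
        simp [ssChild, this, hi]
    rw [Finset.sum_congr rfl (fun i _ => key i)]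
    simp
end Aux2
section Aux3
variable {d β ℓ : ℕ}

lemma lapColSum (hd : 1 ≤ d) (hβ : 1 ≤ β) {l : ℕ} (hl : l < ℓ) (w : SSV d β ℓ) :
    ∑ v ∈ Finset.univ.filter (fun v : SSV d β ℓ => ssDepth v = l), ssLap d β ℓ v w
      = (if ssDepth w = l then (1:ℝ) else 0) - (if ssDepth w + 1 = l then (1:ℝ) else 0) := by
  unfold ssLap
  rw [Finset.sum_sub_distrib]
  congr 1
  · have h1 : ∀ v ∈ Finset.univ.filter (fun v : SSV d β ℓ => ssDepth v = l),
        (if v = w ∧ ssDepth w < ℓ then (1:ℝ) else 0) = if v = w then (1:ℝ) else 0 := by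
      intro v hv
      rcases Finset.mem_filter.mp hv with ⟨-, hv⟩
      by_cases h : v = w
      · subst h; rw [if_pos ⟨rfl, hv ▸ hl⟩, if_pos rfl]
      · rw [if_neg (fun hc => h hc.1), if_neg h]
    rw [Finset.sum_congr rfl h1, Finset.sum_ite_eq' _ w (fun _ => (1:ℝ))]
    by_cases h : ssDepth w = l <;> simp [h]
  · by_cases h : ssDepth w + 1 = l
    · have hw : ssDepth w < ℓ := by omega
      rw [if_pos h]
      rw [Finset.sum_filter_of_ne (fun v _ hne => ?_)]
      · exact childCount hd hβ w hw
      · by_cases hc : ssChild β v w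
        · rw [ssChild_depth hc, h]
        · exact absurd (if_neg hc) hne
    · rw [if_neg h]
      refine Finset.sum_eq_zero (fun v hv => ?_)
      rcases Finset.mem_filter.mp hv with ⟨-, hv⟩
      refine if_neg (fun hc => h ?_)
      rw [← ssChild_depth hc, hv]

lemma mainS (hd : 1 ≤ d) (hβ : 1 ≤ β) (τ : ℝ) :
    ∀ n : ℕ, ∀ l : ℕ, l < ℓ →
    ∑ v ∈ Finset.univ.filter (fun v : SSV d β ℓ => ssDepth v = l),
      (((-τ • ssLap d β ℓ) ^ n).mulVec (fun v => if v = none then (1 : ℝ) else 0)) v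
      = (n.choose l : ℝ) * τ ^ l * (-τ) ^ (n - l) := by
  intro n
  induction n with
  | zero =>
    intro l hl
    rw [pow_zero, Matrix.one_mulVec]
    rw [Finset.sum_ite_eq' _ (none : SSV d β ℓ) (fun _ => (1:ℝ))]
    cases l with
    | zero => simp [Finset.mem_filter, show ssDepth (none : SSV d β ℓ) = 0 from rfl]
    | succ m => simp [Finset.mem_filter, show ssDepth (none : SSV d β ℓ) = 0 from rfl, Nat.choose_eq_zero_of_lt (Nat.succ_pos m)]
  | succ n ih =>
    intro l hl
    rw [pow_succ', ← Matrix.mulVec_mulVec]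
    set y := ((-τ • ssLap d β ℓ) ^ n).mulVec (fun v => if v = none then (1 : ℝ) else 0) with hy
    have expand : ∀ v : SSV d β ℓ, ((-τ • ssLap d β ℓ).mulVec y) v
        = ∑ w : SSV d β ℓ, (-τ) * ssLap d β ℓ v w * y w := by
      intro v
      simp [Matrix.mulVec, dotProduct, Matrix.smul_apply, smul_eq_mul]
    rw [Finset.sum_congr rfl (fun v _ => expand v), Finset.sum_comm]
    have swap : ∀ w : SSV d β ℓ,
        (∑ v ∈ Finset.univ.filter (fun v : SSV d β ℓ => ssDepth v = l), (-τ) * ssLap d β ℓ v w * y w)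
        = (-τ) * ((if ssDepth w = l then (1:ℝ) else 0) - (if ssDepth w + 1 = l then (1:ℝ) else 0)) * y w := by
      intro w
      rw [← Finset.sum_mul, ← Finset.mul_sum, lapColSum hd hβ hl w]
    rw [Finset.sum_congr rfl (fun w _ => swap w)]
    have split : ∑ w : SSV d β ℓ,
        (-τ) * ((if ssDepth w = l then (1:ℝ) else 0) - (if ssDepth w + 1 = l then (1:ℝ) else 0)) * y w
        = (-τ) * (∑ w ∈ Finset.univ.filter (fun w : SSV d β ℓ => ssDepth w = l), y w)
          + τ * (∑ w ∈ Finset.univ.filter (fun w : SSV d β ℓ => ssDepth w + 1 = l), y w) := by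
      rw [Finset.sum_filter, Finset.sum_filter, Finset.mul_sum, Finset.mul_sum, ← Finset.sum_add_distrib]
      refine Finset.sum_congr rfl (fun w _ => ?_)
      by_cases h1 : ssDepth w = l <;> by_cases h2 : ssDepth w + 1 = l <;>
        simp [h1, h2] <;> ring
    rw [split]
    cases l with
    | zero =>
      have h2 : Finset.univ.filter (fun w : SSV d β ℓ => ssDepth w + 1 = 0) = ∅ := by
        refine Finset.filter_false_of_mem (fun w _ => ?_); omega
      rw [h2, Finset.sum_empty, mul_zero, add_zero, ih 0 hl]
      simp [pow_succ]
      ring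
    | succ m =>
      have hm : m < ℓ := by omega
      have hfil : Finset.univ.filter (fun w : SSV d β ℓ => ssDepth w + 1 = m + 1)
          = Finset.univ.filter (fun w : SSV d β ℓ => ssDepth w = m) := by
        refine Finset.filter_congr (fun w _ => ?_); omega
      rw [hfil, ih (m+1) hl, ih m hm]
      rcases Nat.lt_or_ge n m with h | h
      · rw [Nat.choose_eq_zero_of_lt h, Nat.choose_eq_zero_of_lt (by omega),
          Nat.choose_eq_zero_of_lt (by omega)]
        simp
      · rcases Nat.eq_or_lt_of_le h with h' | h'
        · subst h'
          rw [Nat.choose_eq_zero_of_lt (by omega), Nat.choose_self, Nat.choose_self]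
          simp [pow_succ]
          ring
        · obtain ⟨k, hk⟩ : ∃ k, n = m + 1 + k := ⟨n - (m+1), by omega⟩
          subst hk
          rw [Nat.choose_succ_succ (m + 1 + k) m]
          have e1 : m + 1 + k - (m + 1) = k := by omega
          have e2 : m + 1 + k - m = k + 1 := by omega
          have e3 : m + 1 + k + 1 - (m + 1) = k + 1 := by omega
          rw [e1, e2, e3]
          push_cast
          ring
end Aux3
section Aux4
variable {d β ℓ : ℕ}

lemma gHasSum (τ : ℝ) (l : ℕ) :
    HasSum (fun n : ℕ => ((n.factorial : ℝ))⁻¹ * ((n.choose l : ℝ) * τ ^ l * (-τ) ^ (n - l)))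
      (Real.exp (-τ) * (τ ^ l / l.factorial)) := by
  have hinj : Function.Injective (fun m : ℕ => m + l) := fun a b h => by simpa using h
  rw [← Function.Injective.hasSum_iff hinj ?_]
  · have hcomp : (fun n : ℕ => ((n.factorial : ℝ))⁻¹ * ((n.choose l : ℝ) * τ ^ l * (-τ) ^ (n - l)))
        ∘ (fun m : ℕ => m + l)
        = fun m : ℕ => (τ ^ l / l.factorial) * ((-τ) ^ m / m.factorial) := by
      funext m
      have key : ((m + l).choose l : ℝ) * l.factorial * m.factorial = (m + l).factorial := by
        have := Nat.choose_mul_factorial_mul_factorial (Nat.le_add_left l m)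
        have e : m + l - l = m := by omega
        rw [e] at this
        exact_mod_cast this
      have hfl : (l.factorial : ℝ) ≠ 0 := Nat.cast_ne_zero.mpr l.factorial_ne_zero
      have hfm : (m.factorial : ℝ) ≠ 0 := Nat.cast_ne_zero.mpr m.factorial_ne_zero
      have hfml : ((m + l).factorial : ℝ) ≠ 0 := Nat.cast_ne_zero.mpr (m + l).factorial_ne_zero
      simp only [Function.comp_apply]
      have e : m + l - l = m := by omega
      rw [e]
      have ccast : ((m + l).choose l : ℝ) = (m + l).factorial / (l.factorial * m.factorial) := by
        rw [eq_div_iff (by positivity)]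
        linear_combination key
      rw [ccast]
      field_simp
    rw [hcomp, mul_comm (Real.exp (-τ))]
    have hexp : HasSum (fun m : ℕ => (-τ) ^ m / m.factorial) (Real.exp (-τ)) := by
      rw [Real.exp_eq_exp_ℝ]
      exact NormedSpace.expSeries_div_hasSum_exp (-τ)
    exact hexp.mul_left _
  · intro n hn
    have hnl : n < l := by
      by_contra hge
      exact hn ⟨n - l, by show n - l + l = n; omega⟩
    rw [Nat.choose_eq_zero_of_lt hnl]
    simp
end Aux4
section Aux5
variable {d β ℓ : ℕ}

lemma ballHeat (hd : 1 ≤ d) (hβ : 1 ≤ β) (τ : ℝ) {l : ℕ} (hl : l < ℓ) :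
    ∑ v ∈ Finset.univ.filter (fun v : SSV d β ℓ => ssDepth v = l),
      ((NormedSpace.exp (-τ • ssLap d β ℓ)).mulVec
        (fun v => if v = none then (1 : ℝ) else 0)) v
      = Real.exp (-τ) * (τ ^ l / l.factorial) := by
  letI : NormedRing (Matrix (SSV d β ℓ) (SSV d β ℓ) ℝ) := Matrix.linftyOpNormedRing
  letI : NormedAlgebra ℝ (Matrix (SSV d β ℓ) (SSV d β ℓ) ℝ) := Matrix.linftyOpNormedAlgebra
  set A := -τ • ssLap d β ℓ with hA
  set e0 : SSV d β ℓ → ℝ := fun v => if v = none then (1 : ℝ) else 0 with he0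
  have hsum : HasSum (fun n : ℕ => ((n.factorial : ℝ))⁻¹ • A ^ n) (NormedSpace.exp A) :=
    NormedSpace.exp_series_hasSum_exp' (𝕂 := ℝ) A
  set φfun : Matrix (SSV d β ℓ) (SSV d β ℓ) ℝ → ℝ :=
    fun M => ∑ v ∈ Finset.univ.filter (fun v : SSV d β ℓ => ssDepth v = l), M.mulVec e0 v with hφ
  have hadd : ∀ M N, φfun (M + N) = φfun M + φfun N := by
    intro M N
    simp only [hφ, Matrix.add_mulVec, Pi.add_apply, Finset.sum_add_distrib]
  set φ : Matrix (SSV d β ℓ) (SSV d β ℓ) ℝ →+ ℝ := AddMonoidHom.mk' φfun hadd with hφ'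
  have hcont : Continuous φfun := by
    refine continuous_finset_sum _ (fun v _ => ?_)
    have : (fun M : Matrix (SSV d β ℓ) (SSV d β ℓ) ℝ => M.mulVec e0 v)
        = fun M => ∑ w : SSV d β ℓ, M v w * e0 w := by
      funext M; simp [Matrix.mulVec, dotProduct]
    rw [this]
    exact continuous_finset_sum _ (fun w _ =>
      ((((continuous_apply w).comp (continuous_apply v) : Continuous fun M : Matrix (SSV d β ℓ) (SSV d β ℓ) ℝ => M v w)).mul continuous_const))
  have hmap := hsum.map φ hcont
  have hval : ∀ n : ℕ, φ (((n.factorial : ℝ))⁻¹ • A ^ n)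
      = ((n.factorial : ℝ))⁻¹ * ((n.choose l : ℝ) * τ ^ l * (-τ) ^ (n - l)) := by
    intro n
    have : φ (((n.factorial : ℝ))⁻¹ • A ^ n)
        = ((n.factorial : ℝ))⁻¹ * φfun (A ^ n) := by
      simp only [hφ', AddMonoidHom.mk'_apply, hφ, Matrix.smul_mulVec,
        Pi.smul_apply, smul_eq_mul, Finset.mul_sum]
    rw [this]
    congr 1
    exact mainS hd hβ τ n l hl
  have hg := gHasSum τ l
  have : φ (NormedSpace.exp A) = Real.exp (-τ) * (τ ^ l / l.factorial) := by
    refine HasSum.unique ?_ hg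
    have := hmap
    simp only [Function.comp_def] at this
    exact (funext hval : _) ▸ this
  exact this
end Aux5

/-- With heat initialized at the center of the source-star graph, for any radius `R < ℓ` the total
heat within distance `R` of the center equals `Γ(R+1, τ)/Γ(R+1) = e^{-τ} Σ_{l=0}^{R} τ^l / l!`. -/
theorem sourceStar_ball_heat (d β ℓ : ℕ) (hd : 1 ≤ d) (hβ : 1 ≤ β) (hℓ : 1 ≤ ℓ)
    (R : ℕ) (hR : R < ℓ) (τ : ℝ) (hτ : 0 ≤ τ) :
    ∑ v ∈ Finset.univ.filter (fun v : SSV d β ℓ => ssDepth v ≤ R),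
        ((NormedSpace.exp (-τ • ssLap d β ℓ)).mulVec
          (fun v => if v = none then (1 : ℝ) else 0)) v =
      Real.exp (-τ) * ∑ l ∈ Finset.range (R + 1), τ ^ l / l.factorial := by
  set f : SSV d β ℓ → ℝ := fun v =>
    ((NormedSpace.exp (-τ • ssLap d β ℓ)).mulVec (fun v => if v = none then (1 : ℝ) else 0)) v
    with hf
  have hmaps : ∀ v ∈ Finset.univ.filter (fun v : SSV d β ℓ => ssDepth v ≤ R),
      ssDepth v ∈ Finset.range (R + 1) := by
    intro v hv
    rcases Finset.mem_filter.mp hv with ⟨-, hv⟩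
    exact Finset.mem_range.mpr (by omega)
  rw [← Finset.sum_fiberwise_of_maps_to hmaps f]
  have hfib : ∀ l ∈ Finset.range (R + 1),
      (Finset.univ.filter (fun v : SSV d β ℓ => ssDepth v ≤ R)).filter
          (fun v => ssDepth v = l)
        = Finset.univ.filter (fun v : SSV d β ℓ => ssDepth v = l) := by
    intro l hl
    rcases Finset.mem_range.mp hl with hl'
    rw [Finset.filter_filter]
    refine Finset.filter_congr (fun v _ => ?_)
    constructor
    · exact fun h => h.2
    · exact fun h => ⟨by omega, h⟩
  rw [Finset.sum_congr rfl (fun l hl => by rw [hfib l hl])]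
  have hball : ∀ l ∈ Finset.range (R + 1),
      ∑ v ∈ Finset.univ.filter (fun v : SSV d β ℓ => ssDepth v = l), f v
        = Real.exp (-τ) * (τ ^ l / l.factorial) := by
    intro l hl
    have hl' := Finset.mem_range.mp hl
    exact ballHeat hd hβ τ (by omega : l < ℓ)
  rw [Finset.sum_congr rfl hball, ← Finset.mul_sum]
end

section
/- (Heat containment theorem) Let G be any finite directed graph with out-degree normalized Laplacian ℒ (columns of nodes with out-neighbors sum to zero; nodes without out-neighbors have zero column). Let u(τ) = exp(-τℒ)·e_j for a node j, and R ∈ ℕ. Then the total heat within the R-hop out-neighborhood of j is bounded below: Σ_{i : dist(j,i) ≤ R} u_i(τ) ≥ e^{-τ} Σ_{l=0}^{R} τ^l/l! for all τ ≥ 0. -/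
open scoped Classical

/-- Heat containment theorem: for any finite directed graph with nonnegative weighted adjacency
matrix `A` (no self-loops) and out-degree normalized Laplacian `L`, the heat
`u(τ) = exp(-τL) e_j` remaining within the `R`-hop directed out-neighbourhood of the
initialization node `j` is at least `Q(R+1, τ) = e^{-τ} Σ_{l=0}^{R} τ^l / l!`. -/
theorem heat_containment {V : Type*} [Fintype V] [DecidableEq V]
    (A : Matrix V V ℝ) (hA : ∀ i j, 0 ≤ A i j) (hloop : ∀ j, A j j = 0)
    (L : Matrix V V ℝ)
    (hL : ∀ i j, L i j =
      if (∑ k, A k j) = 0 then 0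
      else (if i = j then (1 : ℝ) else 0) - A i j / ∑ k, A k j)
    (j : V) (R : ℕ) (τ : ℝ) (hτ : 0 ≤ τ) :
    Real.exp (-τ) * ∑ l ∈ Finset.range (R + 1), τ ^ l / l.factorial ≤
      ∑ i ∈ Finset.univ.filter (fun i : V =>
          ∃ k ≤ R, ∃ p : Fin (k + 1) → V, p 0 = j ∧ p (Fin.last k) = i ∧
            ∀ t : Fin k, A (p t.succ) (p t.castSucc) ≠ 0),
        ((NormedSpace.exp (-τ • L)).mulVec (Pi.single j 1)) i := by
  letI : SeminormedRing (Matrix V V ℝ) := Matrix.linftyOpSemiNormedRing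
  letI : NormedRing (Matrix V V ℝ) := Matrix.linftyOpNormedRing
  letI : NormedAlgebra ℝ (Matrix V V ℝ) := Matrix.linftyOpNormedAlgebra
  set d : V → ℝ := fun j' => ∑ k, A k j' with hd_def
  have hd : ∀ j', 0 ≤ d j' := fun j' => Finset.sum_nonneg fun k _ => hA k j'
  set M : Matrix V V ℝ := 1 - L with hM_def
  have hM : ∀ i j', M i j' =
      if d j' = 0 then (if i = j' then (1 : ℝ) else 0) else A i j' / d j' := by
    intro i j'
    have h1 : M i j' = (if i = j' then (1 : ℝ) else 0) - L i j' := by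
      simp [hM_def, Matrix.sub_apply, Matrix.one_apply]
    rw [h1, hL i j']
    by_cases h : d j' = 0
    · simp [h, hd_def] at *
      simp [h]
    · have h' : ¬ (∑ k, A k j') = 0 := h
      simp [h', h, hd_def]
  -- nonnegativity of M
  have hMnn : ∀ i j', 0 ≤ M i j' := by
    intro i j'
    rw [hM]
    by_cases h : d j' = 0
    · simp only [h, if_true]; positivity
    · simp only [h, if_false]
      exact div_nonneg (hA i j') (hd j')
  -- column sums of M are 1
  have hcol : ∀ j', ∑ i, M i j' = 1 := by
    intro j'
    by_cases h : d j' = 0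
    · simp [hM, h]
    · have : ∑ i, M i j' = (∑ i, A i j') / d j' := by
        rw [Finset.sum_div]
        exact Finset.sum_congr rfl fun i _ => by rw [hM, if_neg h]
      rw [this, hd_def, div_self h]
  -- entries of powers of M are nonnegative
  have hMpow_nn : ∀ n i j', 0 ≤ (M ^ n) i j' := by
    intro n
    induction n with
    | zero => intro i j'; simp [Matrix.one_apply]; positivity
    | succ n ih =>
      intro i j'
      rw [pow_succ', Matrix.mul_apply]
      exact Finset.sum_nonneg fun m _ => mul_nonneg (hMnn i m) (ih m j')
  -- column sums of powers of M are 1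
  have hMpow_col : ∀ n j', ∑ i, (M ^ n) i j' = 1 := by
    intro n
    induction n with
    | zero => intro j'; simp [Matrix.one_apply]
    | succ n ih =>
      intro j'
      have : ∑ i, (M ^ (n + 1)) i j' = ∑ m, (∑ i, M i m) * (M ^ n) m j' := by
        simp_rw [pow_succ', Matrix.mul_apply, Finset.sum_mul]
        rw [Finset.sum_comm]
      rw [this]
      simp_rw [hcol, one_mul]
      exact ih j'
  -- support of M^n is within n hops
  have hsupp : ∀ n i, (M ^ n) i j ≠ 0 →
      ∃ k ≤ n, ∃ p : Fin (k + 1) → V, p 0 = j ∧ p (Fin.last k) = i ∧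
        ∀ t : Fin k, A (p t.succ) (p t.castSucc) ≠ 0 := by
    intro n
    induction n with
    | zero =>
      intro i h
      have hij : i = j := by
        by_contra hne
        simp [Matrix.one_apply, hne] at h
      exact ⟨0, le_refl 0, fun _ => j, rfl, hij ▸ rfl, fun t => t.elim0⟩
    | succ n ih =>
      intro i h
      rw [pow_succ', Matrix.mul_apply] at h
      obtain ⟨m, _, hm⟩ := Finset.exists_ne_zero_of_sum_ne_zero h
      have hMim : M i m ≠ 0 := fun h0 => hm (by rw [h0, zero_mul])
      have hMn : (M ^ n) m j ≠ 0 := fun h0 => hm (by rw [h0, mul_zero])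
      obtain ⟨k, hk, p, hp0, hpl, hpe⟩ := ih m hMn
      by_cases him : i = m
      · exact ⟨k, hk.trans (Nat.le_succ n), p, hp0, him ▸ hpl, hpe⟩
      · have hAim : A i m ≠ 0 := by
          intro hA0
          apply hMim
          rw [hM]
          by_cases hdm : d m = 0
          · simp [hdm, him]
          · simp [hdm, hA0]
        refine ⟨k + 1, Nat.succ_le_succ hk, Fin.snoc p i, ?_, ?_, ?_⟩
        · have : (0 : Fin (k + 2)) = Fin.castSucc 0 := rfl
          rw [this, Fin.snoc_castSucc]; exact hp0
        · rw [Fin.snoc_last]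
        · intro t
          refine Fin.lastCases ?_ ?_ t
          · have h1 : (Fin.last k).succ = Fin.last (k + 1) := rfl
            rw [h1, Fin.snoc_last, Fin.snoc_castSucc, hpl]
            exact hAim
          · intro s
            rw [Fin.succ_castSucc, Fin.snoc_castSucc, Fin.snoc_castSucc]
            exact hpe s
  set S : Finset V := Finset.univ.filter (fun i : V =>
      ∃ k ≤ R, ∃ p : Fin (k + 1) → V, p 0 = j ∧ p (Fin.last k) = i ∧
        ∀ t : Fin k, A (p t.succ) (p t.castSucc) ≠ 0) with hS_def
  -- partial column sums over S for n ≤ R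
  have hcS : ∀ n ≤ R, ∑ i ∈ S, (M ^ n) i j = 1 := by
    intro n hn
    rw [← hMpow_col n j]
    refine Finset.sum_subset (Finset.subset_univ S) ?_
    intro x _ hx
    by_contra h0
    apply hx
    obtain ⟨k, hk, p, hp⟩ := hsupp n x h0
    rw [hS_def, Finset.mem_filter]
    exact ⟨Finset.mem_univ x, k, hk.trans hn, p, hp⟩
  have hcS_nn : ∀ n, 0 ≤ ∑ i ∈ S, (M ^ n) i j :=
    fun n => Finset.sum_nonneg fun i _ => hMpow_nn n i j
  -- the exponential decomposition
  have hdecomp : NormedSpace.exp (-τ • L) =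
      Real.exp (-τ) • NormedSpace.exp (τ • M) := by
    have h1 : -τ • L = (-τ) • (1 : Matrix V V ℝ) + τ • M := by
      rw [hM_def]
      module
    have hcomm : Commute ((-τ) • (1 : Matrix V V ℝ)) (τ • M) :=
      (Commute.one_left (τ • M)).smul_left (-τ)
    rw [h1, Matrix.exp_add_of_commute _ _ hcomm]
    have h2 : NormedSpace.exp ((-τ) • (1 : Matrix V V ℝ)) =
        Real.exp (-τ) • (1 : Matrix V V ℝ) := by
      have h3 : (-τ) • (1 : Matrix V V ℝ) = algebraMap ℝ (Matrix V V ℝ) (-τ) :=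
        (Algebra.algebraMap_eq_smul_one (-τ)).symm
      rw [h3]
      erw [← NormedSpace.algebraMap_exp_comm (𝕂 := ℝ) (𝔸 := Matrix V V ℝ)
        (-τ)]
      rw [← Real.exp_eq_exp_ℝ,
        Algebra.algebraMap_eq_smul_one]
    rw [h2, smul_mul_assoc, one_mul]
  -- the entry-sum additive map
  let φ : Matrix V V ℝ →+ ℝ :=
    { toFun := fun B => ∑ i ∈ S, B i j
      map_zero' := by simp
      map_add' := fun B C => by simp [Matrix.add_apply, Finset.sum_add_distrib] }
  have hφcont : Continuous φ := by
    apply continuous_finset_sum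
    intro i _
    exact (continuous_apply j).comp (continuous_apply i)
  -- summability of the exponential series
  have hsum : Summable fun n : ℕ => ((n.factorial : ℝ))⁻¹ • (τ • M) ^ n :=
    NormedSpace.expSeries_summable' (𝕂 := ℝ) (τ • M)
  have hmap : HasSum (fun n : ℕ => φ (((n.factorial : ℝ))⁻¹ • (τ • M) ^ n))
      (φ (NormedSpace.exp (τ • M))) := by
    rw [NormedSpace.exp_eq_tsum ℝ]
    exact hsum.hasSum.map φ hφcont
  have hterm : ∀ n : ℕ, φ (((n.factorial : ℝ))⁻¹ • (τ • M) ^ n) =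
      τ ^ n / n.factorial * ∑ i ∈ S, (M ^ n) i j := by
    intro n
    have h1 : (τ • M) ^ n = τ ^ n • M ^ n := smul_pow τ M n
    simp only [φ, AddMonoidHom.coe_mk, ZeroHom.coe_mk, h1, smul_smul,
      Matrix.smul_apply, smul_eq_mul]
    rw [Finset.mul_sum]
    congr 1
    ring
  -- the series terms are nonneg and summable
  have hg_nn : ∀ n, 0 ≤ τ ^ n / n.factorial * ∑ i ∈ S, (M ^ n) i j := by
    intro n
    apply mul_nonneg
    · positivity
    · exact hcS_nn n
  have hgsum : Summable fun n : ℕ => τ ^ n / n.factorial * ∑ i ∈ S, (M ^ n) i j := by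
    have := hsum.map φ hφcont
    exact this.congr hterm
  -- lower bound on φ(exp(τM))
  have hlow : ∑ l ∈ Finset.range (R + 1), τ ^ l / l.factorial ≤
      φ (NormedSpace.exp (τ • M)) := by
    have heq : φ (NormedSpace.exp (τ • M)) =
        ∑' n : ℕ, τ ^ n / n.factorial * ∑ i ∈ S, (M ^ n) i j :=
      hmap.tsum_eq.symm.trans (tsum_congr hterm)
    rw [heq]
    calc ∑ l ∈ Finset.range (R + 1), τ ^ l / l.factorial
        = ∑ l ∈ Finset.range (R + 1), τ ^ l / l.factorial * ∑ i ∈ S, (M ^ l) i j := by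
          refine Finset.sum_congr rfl fun l hl => ?_
          rw [hcS l (Nat.lt_succ_iff.mp (Finset.mem_range.mp hl)), mul_one]
      _ ≤ ∑' n : ℕ, τ ^ n / n.factorial * ∑ i ∈ S, (M ^ n) i j :=
          Summable.sum_le_tsum _ (fun n _ => hg_nn n) hgsum
  -- put everything together
  have hfinal : ∑ i ∈ S, ((NormedSpace.exp (-τ • L)).mulVec (Pi.single j 1)) i =
      Real.exp (-τ) * φ (NormedSpace.exp (τ • M)) := by
    rw [hdecomp]
    simp only [Matrix.mulVec_single_one, Matrix.col_apply, mul_one, Matrix.smul_apply, smul_eq_mul, φ,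
      AddMonoidHom.coe_mk, ZeroHom.coe_mk]
    rw [Finset.mul_sum]
  calc Real.exp (-τ) * ∑ l ∈ Finset.range (R + 1), τ ^ l / l.factorial
      ≤ Real.exp (-τ) * φ (NormedSpace.exp (τ • M)) :=
        mul_le_mul_of_nonneg_left hlow (Real.exp_nonneg _)
    _ = ∑ i ∈ S, ((NormedSpace.exp (-τ • L)).mulVec (Pi.single j 1)) i := hfinal.symm
end

section
/- Let X be an n×n complex matrix and define the K-th order Taylor approximation T_K(X,τ) = Σ_{k=0}^{K} ((-τ)^k e^{-τ}/k!)(X - I)^k of exp(-τX). If ‖X - I‖ ≤ 1 for a submultiplicative matrix norm ‖·‖, then for all τ ≥ 0, ‖exp(-τX) - T_K(X,τ)‖ ≤ (τ^{K+1}/(K+1)!)·e^{2τ}. -/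
/-- Error bound for the truncated Taylor approximation of the matrix exponential: if `N` is a
submultiplicative matrix norm and `‖X - I‖ ≤ 1`, then for all `τ ≥ 0`,
`‖exp(-τX) - T_K(X,τ)‖ ≤ (τ^{K+1}/(K+1)!) e^{2τ}`, where
`T_K(X,τ) = Σ_{k=0}^{K} ((-τ)^k e^{-τ}/k!) (X - I)^k`. -/
theorem taylor_error_bound {n : ℕ} (N : Matrix (Fin n) (Fin n) ℂ → ℝ)
    (hN0 : ∀ A, 0 ≤ N A)
    (hNadd : ∀ A B, N (A + B) ≤ N A + N B)
    (hNsmul : ∀ (c : ℂ) A, N (c • A) = ‖c‖ * N A)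
    (hNmul : ∀ A B, N (A * B) ≤ N A * N B)
    (hNcont : Continuous N)
    (X : Matrix (Fin n) (Fin n) ℂ) (hX : N (X - 1) ≤ 1)
    (K : ℕ) (τ : ℝ) (hτ : 0 ≤ τ) :
    N (NormedSpace.exp (-τ • X) -
        ∑ k ∈ Finset.range (K + 1),
          (((-τ) ^ k * Real.exp (-τ) / k.factorial : ℝ) : ℂ) • (X - 1) ^ k) ≤
      τ ^ (K + 1) / (K + 1).factorial * Real.exp (2 * τ) := by
  letI : SeminormedRing (Matrix (Fin n) (Fin n) ℂ) := Matrix.linftyOpSemiNormedRing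
  letI : NormedRing (Matrix (Fin n) (Fin n) ℂ) := Matrix.linftyOpNormedRing
  letI : NormedAlgebra ℂ (Matrix (Fin n) (Fin n) ℂ) := Matrix.linftyOpNormedAlgebra
  set Y : Matrix (Fin n) (Fin n) ℂ := X - 1 with hYdef
  -- basic facts about N
  have hNzero : N 0 = 0 := by
    have := hNsmul 0 0
    simpa using this
  -- N of powers of Y is at most 1 for positive exponents
  have hpow : ∀ m : ℕ, 1 ≤ m → N (Y ^ m) ≤ 1 := by
    intro m hm
    induction m with
    | zero => omega
    | succ m ih =>
      by_cases hm0 : m = 0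
      · subst hm0; simpa using hX
      · have hm' : 1 ≤ m := by omega
        calc N (Y ^ (m + 1)) = N (Y ^ m * Y) := by rw [pow_succ]
          _ ≤ N (Y ^ m) * N Y := hNmul _ _
          _ ≤ 1 * 1 := mul_le_mul (ih hm') hX (hN0 _) zero_le_one
          _ = 1 := one_mul 1
  -- N of a finite sum
  have hNsum : ∀ (m : ℕ) (f : ℕ → Matrix (Fin n) (Fin n) ℂ),
      N (∑ i ∈ Finset.range m, f i) ≤ ∑ i ∈ Finset.range m, N (f i) := by
    intro m f
    induction m with
    | zero => simp [hNzero]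
    | succ m ih =>
      rw [Finset.sum_range_succ, Finset.sum_range_succ]
      exact le_trans (hNadd _ _) (add_le_add_left ih _)
  -- key: N of the sum of a series is bounded by the sum of bounds
  have key : ∀ (f : ℕ → Matrix (Fin n) (Fin n) ℂ) (S : Matrix (Fin n) (Fin n) ℂ)
      (g : ℕ → ℝ) (G : ℝ), HasSum f S → HasSum g G → (∀ k, N (f k) ≤ g k) → N S ≤ G := by
    intro f S g G hf hg hle
    have h1 : Filter.Tendsto (fun m => N (∑ i ∈ Finset.range m, f i))
        Filter.atTop (nhds (N S)) := (hNcont.tendsto S).comp hf.tendsto_sum_nat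
    refine le_of_tendsto h1 (Filter.Eventually.of_forall fun m => ?_)
    calc N (∑ i ∈ Finset.range m, f i) ≤ ∑ i ∈ Finset.range m, N (f i) := hNsum m f
      _ ≤ ∑ i ∈ Finset.range m, g i := Finset.sum_le_sum fun i _ => hle i
      _ ≤ G := sum_le_hasSum _ (fun i _ => le_trans (hN0 _) (hle i)) hg
  -- rewrite the exponential
  have hsmul : (-τ : ℝ) • X = ((-τ : ℝ) : ℂ) • Y + ((-τ : ℝ) : ℂ) • (1 : Matrix (Fin n) (Fin n) ℂ) := by
    rw [hYdef, smul_sub, sub_add_cancel]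
    ext i j
    simp [Matrix.smul_apply, Complex.real_smul]
  have hcomm : Commute (((-τ : ℝ) : ℂ) • Y) (((-τ : ℝ) : ℂ) • (1 : Matrix (Fin n) (Fin n) ℂ)) :=
    ((Commute.one_right Y).smul_left _).smul_right _
  have hexp1 : NormedSpace.exp (((-τ : ℝ) : ℂ) • (1 : Matrix (Fin n) (Fin n) ℂ)) =
      ((Real.exp (-τ) : ℝ) : ℂ) • (1 : Matrix (Fin n) (Fin n) ℂ) := by
    rw [← Algebra.algebraMap_eq_smul_one, ← Algebra.algebraMap_eq_smul_one]
    refine (NormedSpace.algebraMap_exp_comm (𝕂 := ℂ) (𝔸 := Matrix (Fin n) (Fin n) ℂ) _).symm.trans ?_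
    congr 1
    rw [← Complex.exp_eq_exp_ℂ, ← Complex.ofReal_exp]
  have hZexp : NormedSpace.exp (-τ • X) =
      ((Real.exp (-τ) : ℝ) : ℂ) • NormedSpace.exp (((-τ : ℝ) : ℂ) • Y) := by
    rw [hsmul, Matrix.exp_add_of_commute _ _ hcomm, hexp1, mul_smul_comm, mul_one]
  -- the power series for exp of (-τ)•Y
  have hf : HasSum (fun k => ((((-τ : ℝ) : ℂ)) ^ k * ((k.factorial : ℂ))⁻¹) • Y ^ k)
      (NormedSpace.exp (((-τ : ℝ) : ℂ) • Y)) := by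
    have := NormedSpace.exp_series_hasSum_exp' (𝕂 := ℂ) (((-τ : ℝ) : ℂ) • Y)
    convert this using 2 with k
    · rfl
    · rfl
    rw [smul_pow, smul_smul, mul_comm]
    · rfl
    · rfl
  -- rewrite the truncated sum
  have hterm : ∀ k : ℕ, (((-τ) ^ k * Real.exp (-τ) / k.factorial : ℝ) : ℂ) • Y ^ k =
      ((Real.exp (-τ) : ℝ) : ℂ) • (((((-τ : ℝ) : ℂ)) ^ k * ((k.factorial : ℂ))⁻¹) • Y ^ k) := by
    intro k
    rw [smul_smul]
    congr 1
    push_cast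
    ring
  -- the difference as a scaled tail
  have hdiff : NormedSpace.exp (-τ • X) -
      ∑ k ∈ Finset.range (K + 1),
        (((-τ) ^ k * Real.exp (-τ) / k.factorial : ℝ) : ℂ) • Y ^ k =
      ((Real.exp (-τ) : ℝ) : ℂ) •
        (NormedSpace.exp (((-τ : ℝ) : ℂ) • Y) -
          ∑ k ∈ Finset.range (K + 1),
            (((((-τ : ℝ) : ℂ)) ^ k * ((k.factorial : ℂ))⁻¹) • Y ^ k)) := by
    have hsum : ∑ k ∈ Finset.range (K + 1),
        (((-τ) ^ k * Real.exp (-τ) / k.factorial : ℝ) : ℂ) • Y ^ k =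
        ((Real.exp (-τ) : ℝ) : ℂ) • ∑ k ∈ Finset.range (K + 1),
          (((((-τ : ℝ) : ℂ)) ^ k * ((k.factorial : ℂ))⁻¹) • Y ^ k) := by
      rw [Finset.smul_sum]
      exact Finset.sum_congr rfl fun k _ => hterm k
    rw [hZexp, hsum, ← smul_sub]
  rw [hdiff, hNsmul]
  have hnorm : ‖((Real.exp (-τ) : ℝ) : ℂ)‖ = Real.exp (-τ) := by
    rw [Complex.norm_real, Real.norm_eq_abs, abs_of_pos (Real.exp_pos _)]
  rw [hnorm]
  -- tail has sum
  have htail : HasSum (fun j => ((((-τ : ℝ) : ℂ)) ^ (j + (K + 1)) *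
      (((j + (K + 1)).factorial : ℂ))⁻¹) • Y ^ (j + (K + 1)))
      (NormedSpace.exp (((-τ : ℝ) : ℂ) • Y) -
        ∑ k ∈ Finset.range (K + 1),
          (((((-τ : ℝ) : ℂ)) ^ k * ((k.factorial : ℂ))⁻¹) • Y ^ k)) :=
    (hasSum_nat_add_iff' (K + 1)).mpr hf
  -- the bounding series
  have hg : HasSum (fun j : ℕ => τ ^ (K + 1) / (K + 1).factorial * (τ ^ j / j.factorial))
      (τ ^ (K + 1) / (K + 1).factorial * Real.exp τ) := by
    have := NormedSpace.expSeries_div_hasSum_exp τ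
    rw [Real.exp_eq_exp_ℝ]
    exact this.mul_left _
  -- bound each term
  have hbound : ∀ j : ℕ, N (((((-τ : ℝ) : ℂ)) ^ (j + (K + 1)) *
      (((j + (K + 1)).factorial : ℂ))⁻¹) • Y ^ (j + (K + 1))) ≤
      τ ^ (K + 1) / (K + 1).factorial * (τ ^ j / j.factorial) := by
    intro j
    rw [hNsmul]
    have h1 : ‖(((-τ : ℝ) : ℂ)) ^ (j + (K + 1)) * (((j + (K + 1)).factorial : ℂ))⁻¹‖ =
        τ ^ (j + (K + 1)) / (j + (K + 1)).factorial := by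
      rw [norm_mul, norm_pow, norm_inv, Complex.norm_real, Real.norm_eq_abs, abs_neg,
        abs_of_nonneg hτ]
      simp [div_eq_mul_inv, Complex.norm_natCast]
    rw [h1]
    have h2 : N (Y ^ (j + (K + 1))) ≤ 1 := hpow _ (by omega)
    have h3 : τ ^ (j + (K + 1)) / (j + (K + 1)).factorial ≤
        τ ^ (K + 1) / (K + 1).factorial * (τ ^ j / j.factorial) := by
      have hfac : ((K + 1).factorial * j.factorial : ℝ) ≤ ((j + (K + 1)).factorial : ℝ) := by
        have hd : (K + 1).factorial * j.factorial ∣ (j + (K + 1)).factorial := by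
          rw [Nat.add_comm j (K + 1)]
          exact Nat.factorial_mul_factorial_dvd_factorial_add _ _
        exact_mod_cast Nat.le_of_dvd (Nat.factorial_pos _) hd
      have hpos : (0 : ℝ) < (K + 1).factorial * j.factorial := by positivity
      calc τ ^ (j + (K + 1)) / (j + (K + 1)).factorial
          ≤ τ ^ (j + (K + 1)) / ((K + 1).factorial * j.factorial) :=
            div_le_div_of_nonneg_left (by positivity) hpos hfac
        _ = τ ^ (K + 1) / (K + 1).factorial * (τ ^ j / j.factorial) := by
            rw [pow_add]; ring
    calc τ ^ (j + (K + 1)) / (j + (K + 1)).factorial * N (Y ^ (j + (K + 1)))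
        ≤ τ ^ (j + (K + 1)) / (j + (K + 1)).factorial * 1 :=
          mul_le_mul_of_nonneg_left h2 (by positivity)
      _ = τ ^ (j + (K + 1)) / (j + (K + 1)).factorial := mul_one _
      _ ≤ _ := h3
  have hmain : N (NormedSpace.exp (((-τ : ℝ) : ℂ) • Y) -
      ∑ k ∈ Finset.range (K + 1),
        (((((-τ : ℝ) : ℂ)) ^ k * ((k.factorial : ℂ))⁻¹) • Y ^ k)) ≤
      τ ^ (K + 1) / (K + 1).factorial * Real.exp τ :=
    key _ _ _ _ htail hg hbound
  calc Real.exp (-τ) * N (NormedSpace.exp (((-τ : ℝ) : ℂ) • Y) -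
        ∑ k ∈ Finset.range (K + 1),
          (((((-τ : ℝ) : ℂ)) ^ k * ((k.factorial : ℂ))⁻¹) • Y ^ k))
      ≤ Real.exp (-τ) * (τ ^ (K + 1) / (K + 1).factorial * Real.exp τ) :=
        mul_le_mul_of_nonneg_left hmain (Real.exp_pos _).le
    _ = τ ^ (K + 1) / (K + 1).factorial := by
        rw [mul_comm (Real.exp (-τ)), mul_assoc, ← Real.exp_add]
        simp
    _ ≤ τ ^ (K + 1) / (K + 1).factorial * Real.exp (2 * τ) := by
        nth_rewrite 1 [← mul_one (τ ^ (K + 1) / (K + 1).factorial)]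
        exact mul_le_mul_of_nonneg_left (Real.one_le_exp (by positivity)) (by positivity)
end
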